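/- arXiv:1703.02152 — 2 statements merged into one kernel-verified Lean document; each statement's English description precedes it below -/
import Mathlib

section
/- Let F be a Schwartz function on ℝ whose Fourier transform is supported in [−1,1] and with F(0) = 0. Then the function G(x) = F(x)/x (extended by G(0) = F′(0)) is a Schwartz function whose Fourier transform is also supported in [−1,1]. -/
open MeasureTheory Set Complex Real
open scoped FourierTransform ContDiff

lemma aux_schwartz_of_compact {f : ℝ → ℂ} (hf : ContDiff ℝ ∞ f) (h : HasCompactSupport f) :
    ∃ Φ : SchwartzMap ℝ ℂ, ⇑Φ = f := by
  refine ⟨⟨f, hf, fun k n => ?_⟩, rfl⟩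
  have hc : Continuous fun x : ℝ => ‖x‖ ^ k * ‖iteratedFDeriv ℝ n f x‖ :=
    ((continuous_norm.pow k).mul (hf.continuous_iteratedFDeriv (mod_cast le_top)).norm)
  have hs : HasCompactSupport fun x : ℝ => ‖x‖ ^ k * ‖iteratedFDeriv ℝ n f x‖ := by
    apply (h.iteratedFDeriv n).norm.mul_left
  obtain ⟨C, hC⟩ := hs.exists_bound_of_continuous hc
  exact ⟨C, fun x => (le_abs_self _).trans ((Real.norm_eq_abs _ ▸ hC x))⟩

/-- Paley–Wiener type statement: if `F` is Schwartz with Fourier transform supported in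
`[-1,1]` and `F(0) = 0`, then `G(x) = F(x)/x` (with `G(0) = F'(0)`) is Schwartz with
Fourier transform supported in `[-1,1]`. -/
theorem stmt7 (F : SchwartzMap ℝ ℂ) (h0 : F 0 = 0)
    (hsupp : ∀ ξ : ℝ, ξ ∉ Set.Icc (-1 : ℝ) 1 → 𝓕 (fun x => F x) ξ = 0) :
    ∃ G : SchwartzMap ℝ ℂ, (∀ x : ℝ, x ≠ 0 → G x = F x / (x : ℂ)) ∧
      G 0 = deriv (fun x : ℝ => F x) 0 ∧
      ∀ ξ : ℝ, ξ ∉ Set.Icc (-1 : ℝ) 1 → 𝓕 (fun x => G x) ξ = 0 := by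
  classical
  set Fh : SchwartzMap ℝ ℂ := SchwartzMap.fourierTransformCLE ℝ (SchwartzMap ℝ ℂ) F with hFhdef
  have hFh : ⇑Fh = 𝓕 (fun x => F x) := by
    rw [hFhdef]; rfl
  have hFh0 : ∀ ξ : ℝ, ξ ∉ Set.Icc (-1 : ℝ) 1 → Fh ξ = 0 := by
    intro ξ hξ; rw [show Fh ξ = 𝓕 (fun x => F x) ξ from congrFun hFh ξ]; exact hsupp ξ hξ
  -- H : primitive of Fh
  set H : ℝ → ℂ := fun ξ => ∫ t in (-2 : ℝ)..ξ, Fh t with hHdef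
  have hHderiv : ∀ ξ : ℝ, HasDerivAt H (Fh ξ) ξ := fun ξ =>
    (Fh.continuous.integral_hasStrictDerivAt (-2) ξ).hasDerivAt
  have hHsmooth : ContDiff ℝ ∞ H := by
    rw [contDiff_infty_iff_deriv]
    refine ⟨fun ξ => (hHderiv ξ).differentiableAt, ?_⟩
    have : deriv H = ⇑Fh := funext fun ξ => (hHderiv ξ).deriv
    rw [this]
    exact Fh.smooth'
  -- H vanishes for ξ < -1
  have hHleft : ∀ ξ : ℝ, ξ < -1 → H ξ = 0 := by
    intro ξ hξ
    rw [hHdef]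
    have : EqOn (⇑Fh) 0 (Set.uIcc (-2 : ℝ) ξ) := by
      intro t ht
      have h2 : t ≤ max (-2 : ℝ) ξ := (Set.mem_uIcc.1 ht).elim (fun h => h.2.trans (le_max_right _ _)) fun h => h.2.trans (le_max_left _ _)
      have : t < -1 := lt_of_le_of_lt h2 (max_lt (by norm_num) hξ)
      exact hFh0 t (by simp [Set.mem_Icc]; intro h; linarith)
    calc (∫ t in (-2 : ℝ)..ξ, Fh t) = ∫ t in (-2 : ℝ)..ξ, (0 : ℂ) :=
        intervalIntegral.integral_congr this
      _ = 0 := intervalIntegral.integral_zero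
  -- total integral of Fh is zero
  have hinv : 𝓕⁻ (𝓕 (fun x => F x)) = fun x => F x :=
    Continuous.fourierInv_fourier_eq F.continuous F.integrable (by rw [← hFh]; exact Fh.integrable)
  have htotal : (∫ t : ℝ, Fh t) = 0 := by
    have h1 : 𝓕⁻ (𝓕 (fun x => F x)) 0 = F 0 := congrFun hinv 0
    rw [h0] at h1
    rw [← h1, hFh]
    rw [Real.fourierInv_eq]
    simp
  -- H vanishes for ξ > 1
  have hHright : ∀ ξ : ℝ, 1 < ξ → H ξ = 0 := by
    intro ξ hξ
    have hle : (-2 : ℝ) ≤ ξ := by linarith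
    show (∫ t in (-2 : ℝ)..ξ, Fh t) = 0
    rw [intervalIntegral.integral_of_le hle]
    rw [setIntegral_eq_integral_of_forall_compl_eq_zero (fun t ht => ?_)]
    · exact htotal
    · refine hFh0 t ?_
      simp only [Set.mem_Ioc, not_and_or, not_lt, not_le] at ht
      rcases ht with h | h
      · simp [Set.mem_Icc]; intro h'; linarith
      · simp [Set.mem_Icc]; intro h'; linarith
  -- Hs = -2πi * H, as Schwartz
  have hHcsmooth : ContDiff ℝ ∞ fun ξ => (-2 * π * I) * H ξ := contDiff_const.mul hHsmooth
  have hHcsupp : HasCompactSupport fun ξ => (-2 * π * I) * H ξ := by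
    apply HasCompactSupport.intro (isCompact_Icc (a := (-1:ℝ)) (b := 1))
    intro ξ hξ
    simp only [Set.mem_Icc, not_and_or, not_le] at hξ
    rcases hξ with h | h
    · rw [hHleft ξ h, mul_zero]
    · rw [hHright ξ h, mul_zero]
  obtain ⟨Hs, hHs⟩ := aux_schwartz_of_compact hHcsmooth hHcsupp
  -- G = inverse Fourier of Hs
  set G : SchwartzMap ℝ ℂ := (SchwartzMap.fourierTransformCLE ℝ (SchwartzMap ℝ ℂ)).symm Hs with hGdef
  have hFG : 𝓕 (fun x => G x) = ⇑Hs := by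
    have h : SchwartzMap.fourierTransformCLE ℝ (SchwartzMap ℝ ℂ) G = Hs :=
      (SchwartzMap.fourierTransformCLE ℝ (SchwartzMap ℝ ℂ)).apply_symm_apply Hs
    rw [← h]; rfl
  -- key identity: x * G x = F x
  have hDerivHs : deriv (⇑Hs) = fun ξ => (-2 * π * I) * Fh ξ := by
    funext ξ
    rw [hHs]
    exact (((hHderiv ξ).const_mul (-2 * π * I))).deriv
  have hHsInt : Integrable (⇑Hs) := Hs.integrable
  have hHsDiff : Differentiable ℝ (⇑Hs) := Hs.differentiable
  have hDerivInt : Integrable (deriv (⇑Hs)) := by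
    rw [hDerivHs]; exact Fh.integrable.const_mul _
  have hFTD := Real.fourier_deriv hHsInt hHsDiff hDerivInt
  have key : ∀ x : ℝ, (x : ℂ) * G x = F x := by
    intro x
    have h1 := congrFun hFTD (-x)
    rw [hDerivHs] at h1
    have h2 : 𝓕 (fun ξ => (-2 * π * I) * Fh ξ) (-x) = (-2 * π * I) * 𝓕 (⇑Fh) (-x) := by
      have := VectorFourier.fourierIntegral_const_smul 𝐞 (volume : Measure ℝ)
        (innerₗ ℝ) (⇑Fh) (-2 * π * I)
      have h3 := congrFun this (-x)
      change VectorFourier.fourierIntegral 𝐞 volume (innerₗ ℝ) ((-2 * π * I) • ⇑Fh) (-x) =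
        (-2 * π * I) * VectorFourier.fourierIntegral 𝐞 volume (innerₗ ℝ) (⇑Fh) (-x)
      exact h3
    have h4 : 𝓕 (⇑Fh) (-x) = F x := by
      rw [hFh, ← Real.fourierInv_eq_fourier_neg]
      exact congrFun hinv x
    have h5 : 𝓕 (⇑Hs) (-x) = G x := by
      have : ⇑G = 𝓕⁻ ⇑Hs := by
          rw [hGdef]; exact SchwartzMap.fourierInv_coe Hs
      rw [this, Real.fourierInv_eq_fourier_neg]
    rw [h2, h4, h5] at h1
    have hπ : (2 * (π : ℂ) * I) ≠ 0 := by
      simp [Real.pi_ne_zero, Complex.I_ne_zero, Complex.ofReal_ne_zero]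
    have h6 : (2 * (π : ℂ) * I) * ((x : ℂ) * G x) = (2 * (π : ℂ) * I) * F x := by
      rw [smul_eq_mul] at h1
      push_cast at h1 ⊢
      linear_combination h1
    exact mul_left_cancel₀ hπ h6
  refine ⟨G, ?_, ?_, ?_⟩
  · intro x hx
    have h := key x
    have hx' : (x : ℂ) ≠ 0 := Complex.ofReal_ne_zero.2 hx
    field_simp [← h]
    linear_combination h
  · have hFfun : (fun x : ℝ => F x) = fun x : ℝ => (x : ℂ) * G x := funext fun x => (key x).symm
    rw [hFfun]
    have h1 : HasDerivAt (fun x : ℝ => (x : ℂ)) 1 0 := by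
      simpa using (hasDerivAt_id (0:ℝ)).ofReal_comp
    have h2 : HasDerivAt (⇑G) (deriv (⇑G) 0) 0 := G.differentiableAt.hasDerivAt
    have h3 := h1.mul h2
    simp only [Complex.ofReal_zero, zero_mul, mul_zero, one_mul, add_zero] at h3
    exact h3.deriv.symm
  · intro ξ hξ
    rw [hFG, hHs]
    show -2 * (π:ℂ) * I * H ξ = 0
    simp only [Set.mem_Icc, not_and_or, not_le] at hξ
    rcases hξ with h | h
    · rw [hHleft ξ h, mul_zero]
    · rw [hHright ξ h, mul_zero]
end

section
/- Let (X,d,μ) be a doubling metric measure space satisfying (D_Q) with Q ≥ 2. Let E be a bounded Borel set contained in a ball B = B(x,r) with x ∈ E and r > diam(E), and fix p ∈ (2Q/(Q+2), Q). Then for every y ∈ B, Σ_{j ≤ [log₂ r]} 2^j (⨍_{B(y,2^j)} χ_E^p dμ)^{1/p} ≤ C · (r / μ(B)^{1/Q}) · μ(E)^{1/Q}, where C depends only on p, Q and the doubling constants. -/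
open MeasureTheory Metric Set

/-- Potential estimate for characteristic functions: on a space satisfying `(D_Q)`,
`Q ≥ 2`, for `p ∈ (2Q/(Q+2), Q)`, every bounded Borel set `E ⊆ B(x,r)` with `x ∈ E` and
`r > diam E`, and every `y ∈ B(x,r)`,
`Σ_{j ≤ ⌊log₂ r⌋} 2^j (⨍_{B(y,2^j)} χ_E^p)^{1/p} ≤ C r μ(B)^{-1/Q} μ(E)^{1/Q}`. -/
theorem stmt18 {X : Type*} [MetricSpace X] [MeasurableSpace X]
    (μ : Measure X)
    (hV : ∀ (x : X) (r : ℝ), 0 < r → 0 < (μ (ball x r)).toReal)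
    (Q C_Q : ℝ) (hQ : 2 ≤ Q) (hCQ : 0 < C_Q)
    (hDQ : ∀ (x : X) (r R : ℝ), 0 < r → r < R →
      (μ (ball x R)).toReal ≤ C_Q * (R / r) ^ Q * (μ (ball x r)).toReal)
    (p : ℝ) (hp₁ : 2 * Q / (Q + 2) < p) (hp₂ : p < Q) :
    ∃ C > (0 : ℝ), ∀ (E : Set X), MeasurableSet E → Bornology.IsBounded E →
      E.Nonempty → ∀ (x : X) (r : ℝ), x ∈ E → E ⊆ ball x r → EMetric.diam E < ENNReal.ofReal r →
      ∀ y ∈ ball x r,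
        (∑' j : {j : ℤ // j ≤ ⌊Real.logb 2 r⌋},
            (2 : ℝ) ^ (j : ℤ) *
              ((μ (E ∩ ball y ((2 : ℝ) ^ (j : ℤ)))).toReal /
                (μ (ball y ((2 : ℝ) ^ (j : ℤ)))).toReal) ^ (1 / p))
          ≤ C * (r / (μ (ball x r)).toReal ^ (1 / Q)) * (μ E).toReal ^ (1 / Q) := by
  classical
  have hQ0 : (0:ℝ) < Q := by linarith
  have hp0 : (0:ℝ) < p := lt_trans (by positivity) hp₁
  set α : ℝ := 1 - Q / p with hαdef
  have hα : α < 0 := by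
    have h1 : 1 < Q / p := (one_lt_div hp0).2 hp₂
    simp only [hαdef]; linarith
  have h2α : (0:ℝ) < (2:ℝ) ^ α := Real.rpow_pos_of_pos (by norm_num) α
  have h2α1 : (2:ℝ) ^ α < 1 := Real.rpow_lt_one_of_one_lt_of_neg (by norm_num) hα
  have hden : (0:ℝ) < 1 - (2:ℝ) ^ α := by linarith
  set C : ℝ := 2 + C_Q ^ (1/p) * (2:ℝ) ^ (Q/p) * (1 - (2:ℝ)^α)⁻¹ with hCdef
  have hC : 0 < C := by
    have h1 : (0:ℝ) < C_Q ^ (1/p) := Real.rpow_pos_of_pos hCQ _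
    have h2 : (0:ℝ) < (2:ℝ) ^ (Q/p) := Real.rpow_pos_of_pos (by norm_num) _
    have h3 : (0:ℝ) < C_Q ^ (1/p) * (2:ℝ) ^ (Q/p) * (1 - (2:ℝ)^α)⁻¹ := by positivity
    simp only [hCdef]; linarith
  refine ⟨C, hC, ?_⟩
  intro E hE hEb hEne x r hxE hEr hdiam y hy
  have hr : 0 < r := by
    have := hEr hxE
    rw [mem_ball, dist_self] at this
    exact this
  have hfin : ∀ (z : X) (s : ℝ), 0 < s → μ (ball z s) ≠ ⊤ := by
    intro z s hs h
    have := hV z s hs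
    rw [h] at this
    simp at this
  set V : ℝ := (μ (ball x r)).toReal with hVdef
  have hVpos : 0 < V := hV x r hr
  set m : ℝ := (μ E).toReal with hmdef
  have hm0 : 0 ≤ m := ENNReal.toReal_nonneg
  have hEfin : μ E ≠ ⊤ := fun h => hfin x r hr (top_le_iff.1 (h ▸ measure_mono hEr))
  have hmV : m ≤ V := ENNReal.toReal_mono (hfin x r hr) (measure_mono hEr)
  set J : ℤ := ⌊Real.logb 2 r⌋ with hJdef
  have hRHS0 : 0 ≤ C * (r / V ^ (1/Q)) * m ^ (1/Q) := by
    apply mul_nonneg (mul_nonneg hC.le _) (Real.rpow_nonneg hm0 _)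
    exact div_nonneg hr.le (Real.rpow_nonneg hVpos.le _)
  rcases hm0.eq_or_lt with hm | hm
  · -- E has measure zero: every term vanishes
    have hμE : μ E = 0 := by
      have h0 : (μ E).toReal = 0 := by rw [← hmdef]; exact hm.symm
      rcases (ENNReal.toReal_eq_zero_iff _).1 h0 with h | h
      · exact h
      · exact absurd h hEfin
    have hz : ∀ j : {j : ℤ // j ≤ J},
        (2 : ℝ) ^ (j : ℤ) *
          ((μ (E ∩ ball y ((2 : ℝ) ^ (j : ℤ)))).toReal /
            (μ (ball y ((2 : ℝ) ^ (j : ℤ)))).toReal) ^ (1 / p) = 0 := by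
      intro j
      have h1 : μ (E ∩ ball y ((2 : ℝ) ^ (j : ℤ))) = 0 :=
        le_antisymm (le_trans (measure_mono inter_subset_left) hμE.le) (by simp)
      rw [h1]
      simp only [ENNReal.toReal_zero, zero_div]
      rw [Real.zero_rpow (by positivity), mul_zero]
    rw [tsum_congr hz, tsum_zero]
    exact hRHS0
  -- main case : m > 0
  set t : ℝ := r * (m / V) ^ (1/Q) with htdef
  have ht : 0 < t := by
    have : (0:ℝ) < (m / V) ^ (1/Q) := Real.rpow_pos_of_pos (by positivity) _
    positivity
  set j₀ : ℤ := ⌊Real.logb 2 t⌋ with hj₀def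
  have hpow_le : ∀ (a : ℤ) (u : ℝ), 0 < u → (a : ℝ) ≤ Real.logb 2 u → (2:ℝ) ^ a ≤ u := by
    intro a u hu h
    have := Real.rpow_le_rpow_of_exponent_le (by norm_num : (1:ℝ) ≤ 2) h
    rwa [Real.rpow_logb (by norm_num) (by norm_num) hu, Real.rpow_intCast] at this
  have hlt_pow : ∀ (a : ℤ) (u : ℝ), 0 < u → Real.logb 2 u < (a : ℝ) → u < (2:ℝ) ^ a := by
    intro a u hu h
    have := Real.rpow_lt_rpow_of_exponent_lt (by norm_num : (1:ℝ) < 2) h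
    rwa [Real.rpow_logb (by norm_num) (by norm_num) hu, Real.rpow_intCast] at this
  have h2j₀ : (2:ℝ) ^ j₀ ≤ t := hpow_le j₀ t ht (Int.floor_le _)
  have ht2 : t < (2:ℝ) ^ (j₀ + 1) := by
    apply hlt_pow _ _ ht
    push_cast
    exact Int.lt_floor_add_one _
  have h2Jr : ∀ j : ℤ, j ≤ J → (2:ℝ) ^ j ≤ r := by
    intro j hj
    apply hpow_le j r hr
    calc (j:ℝ) ≤ (J:ℝ) := by exact_mod_cast hj
    _ ≤ Real.logb 2 r := Int.floor_le _
  have hA : (0:ℝ) < C_Q * (2*r) ^ Q * (m / V) := by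
    have h1 : (0:ℝ) < (2*r) ^ Q := Real.rpow_pos_of_pos (by linarith) Q
    positivity
  set K : ℝ := (C_Q * (2*r) ^ Q * (m / V)) ^ (1/p) with hKdef
  have hK : 0 < K := Real.rpow_pos_of_pos hA _
  -- Claim A : each term ≤ 2^j
  have claimA : ∀ j : ℤ,
      (2 : ℝ) ^ j *
        ((μ (E ∩ ball y ((2 : ℝ) ^ j))).toReal / (μ (ball y ((2 : ℝ) ^ j))).toReal) ^ (1 / p)
      ≤ (2:ℝ) ^ j := by
    intro j
    have hs : (0:ℝ) < (2:ℝ) ^ j := zpow_pos (by norm_num) j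
    have hVj : 0 < (μ (ball y ((2 : ℝ) ^ j))).toReal := hV y _ hs
    have hratio : (μ (E ∩ ball y ((2 : ℝ) ^ j))).toReal / (μ (ball y ((2 : ℝ) ^ j))).toReal ≤ 1 := by
      rw [div_le_one hVj]
      exact ENNReal.toReal_mono (hfin y _ hs) (measure_mono inter_subset_right)
    have h0 : 0 ≤ (μ (E ∩ ball y ((2 : ℝ) ^ j))).toReal / (μ (ball y ((2 : ℝ) ^ j))).toReal := by
      positivity
    have h5 : (2:ℝ) ^ j *
        ((μ (E ∩ ball y ((2 : ℝ) ^ j))).toReal / (μ (ball y ((2 : ℝ) ^ j))).toReal) ^ (1 / p)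
        ≤ (2:ℝ) ^ j * 1 :=
      mul_le_mul_of_nonneg_left (Real.rpow_le_one h0 hratio (by positivity)) hs.le
    simpa using h5
  -- Claim B : each term with j ≤ J is ≤ K * (2^j)^α
  have claimB : ∀ j : ℤ, j ≤ J →
      (2 : ℝ) ^ j *
        ((μ (E ∩ ball y ((2 : ℝ) ^ j))).toReal / (μ (ball y ((2 : ℝ) ^ j))).toReal) ^ (1 / p)
      ≤ K * ((2:ℝ) ^ j) ^ α := by
    intro j hj
    set s : ℝ := (2:ℝ) ^ j with hsdef
    have hs : (0:ℝ) < s := zpow_pos (by norm_num) j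
    have hsr : s ≤ r := h2Jr j hj
    have hVj : 0 < (μ (ball y s)).toReal := hV y _ hs
    have hsub : ball x r ⊆ ball y (2*r) := by
      intro z hz
      rw [mem_ball] at hz hy ⊢
      have h := dist_triangle z x y
      rw [dist_comm x y] at h
      linarith
    have h1 : V ≤ (μ (ball y (2*r))).toReal :=
      ENNReal.toReal_mono (hfin y (2*r) (by linarith)) (measure_mono hsub)
    have h2 : (μ (ball y (2*r))).toReal ≤ C_Q * (2*r/s) ^ Q * (μ (ball y s)).toReal :=
      hDQ y s (2*r) hs (by linarith)
    have hcQ : (0:ℝ) < C_Q * (2*r/s) ^ Q := by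
      have h3 : (0:ℝ) < (2*r/s) ^ Q := Real.rpow_pos_of_pos (by positivity) Q
      positivity
    have hnum : (μ (E ∩ ball y s)).toReal ≤ m :=
      ENNReal.toReal_mono hEfin (measure_mono inter_subset_left)
    have hVjlb : V / (C_Q * (2*r/s) ^ Q) ≤ (μ (ball y s)).toReal := by
      rw [div_le_iff₀ hcQ]
      calc V ≤ C_Q * (2*r/s) ^ Q * (μ (ball y s)).toReal := h1.trans h2
      _ = (μ (ball y s)).toReal * (C_Q * (2*r/s) ^ Q) := by ring
    have hratio : (μ (E ∩ ball y s)).toReal / (μ (ball y s)).toReal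
        ≤ C_Q * (2*r/s) ^ Q * (m / V) := by
      have hlb : 0 < V / (C_Q * (2*r/s) ^ Q) := by positivity
      calc (μ (E ∩ ball y s)).toReal / (μ (ball y s)).toReal
          ≤ m / (V / (C_Q * (2*r/s) ^ Q)) := div_le_div₀ hm.le hnum hlb hVjlb
      _ = C_Q * (2*r/s) ^ Q * (m / V) := by
            field_simp
    have hstep : ((μ (E ∩ ball y s)).toReal / (μ (ball y s)).toReal) ^ (1/p)
        ≤ (C_Q * (2*r/s) ^ Q * (m / V)) ^ (1/p) :=
      Real.rpow_le_rpow (by positivity) hratio (by positivity)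
    calc s * ((μ (E ∩ ball y s)).toReal / (μ (ball y s)).toReal) ^ (1/p)
        ≤ s * (C_Q * (2*r/s) ^ Q * (m / V)) ^ (1/p) :=
          mul_le_mul_of_nonneg_left hstep hs.le
    _ = K * s ^ α := by
        have hrw : C_Q * (2*r/s) ^ Q * (m / V) = (C_Q * (2*r) ^ Q * (m / V)) / s ^ Q := by
          rw [Real.div_rpow (by linarith : (0:ℝ) ≤ 2*r) hs.le]
          field_simp
        rw [hrw, Real.div_rpow hA.le (Real.rpow_nonneg hs.le Q), ← Real.rpow_mul hs.le,
          ← hKdef, hαdef, Real.rpow_sub hs, Real.rpow_one, mul_one_div]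
        ring
  -- helper : (2^n)^α = (2^α)^n for n : ℕ
  have hgeom : ∀ n : ℕ, ((2:ℝ) ^ (n:ℕ)) ^ α = ((2:ℝ) ^ α) ^ (n:ℕ) := by
    intro n
    rw [← Real.rpow_natCast (2:ℝ) n, ← Real.rpow_mul (by norm_num), mul_comm,
      Real.rpow_mul (by norm_num), Real.rpow_natCast]
  -- key algebraic identity
  have hK1 : K = C_Q ^ (1/p) * (2:ℝ) ^ (Q/p) * r ^ (Q/p) * (m/V) ^ (1/p) := by
    rw [hKdef, Real.mul_rpow (by positivity) (by positivity),
      Real.mul_rpow hCQ.le (Real.rpow_nonneg (by linarith) Q),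
      ← Real.rpow_mul (by linarith : (0:ℝ) ≤ 2*r), mul_one_div,
      Real.mul_rpow (by norm_num : (0:ℝ) ≤ 2) hr.le]
    ring
  have ht1 : t ^ α = r ^ α * (m/V) ^ (α/Q) := by
    rw [htdef, Real.mul_rpow hr.le (Real.rpow_nonneg (by positivity) _),
      ← Real.rpow_mul (by positivity : (0:ℝ) ≤ m/V)]
    rw [show 1/Q*α = α/Q by ring]
  have hKt : K * t ^ α = C_Q ^ (1/p) * (2:ℝ) ^ (Q/p) * (r * (m/V) ^ (1/Q)) := by
    have e1 : r ^ (Q/p) * r ^ α = r := by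
      rw [← Real.rpow_add hr, show Q/p + α = 1 by rw [hαdef]; ring, Real.rpow_one]
    have e2 : (m/V) ^ (1/p) * (m/V) ^ (α/Q) = (m/V) ^ (1/Q) := by
      rw [← Real.rpow_add (by positivity : (0:ℝ) < m/V)]
      congr 1
      rw [hαdef]
      field_simp
      ring
    calc K * t ^ α
        = C_Q ^ (1/p) * (2:ℝ) ^ (Q/p) * (r ^ (Q/p) * r ^ α) * ((m/V) ^ (1/p) * (m/V) ^ (α/Q)) := by
          rw [hK1, ht1]; ring
    _ = C_Q ^ (1/p) * (2:ℝ) ^ (Q/p) * (r * (m/V) ^ (1/Q)) := by rw [e1, e2]; ring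
  have hfinal : 2*t + K * t^α * (1 - (2:ℝ)^α)⁻¹ = C * (r / V ^ (1/Q)) * m ^ (1/Q) := by
    have hVQ : V ^ ((1:ℝ)/Q) ≠ 0 := (Real.rpow_pos_of_pos hVpos _).ne'
    rw [hKt, htdef, hCdef, Real.div_rpow hm.le hVpos.le]
    field_simp
  -- bound every partial sum
  refine tsum_le_of_sum_le' hRHS0 ?_
  intro u
  have hsplit : ∑ a ∈ u, ((2 : ℝ) ^ (a : ℤ) *
        ((μ (E ∩ ball y ((2 : ℝ) ^ (a : ℤ)))).toReal /
          (μ (ball y ((2 : ℝ) ^ (a : ℤ)))).toReal) ^ (1 / p))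
      ≤ (∑ a ∈ u.filter (fun a => a.1 ≤ j₀), (2:ℝ) ^ (a.1))
        + ∑ a ∈ u.filter (fun a => ¬ a.1 ≤ j₀), K * ((2:ℝ) ^ (a.1)) ^ α := by
    rw [← Finset.sum_filter_add_sum_filter_not u (fun a => a.1 ≤ j₀)]
    apply add_le_add
    · exact Finset.sum_le_sum (fun a _ => claimA a.1)
    · exact Finset.sum_le_sum (fun a _ => claimB a.1 a.2)
  have hsum1 : ∑ a ∈ u.filter (fun a => a.1 ≤ j₀), (2:ℝ) ^ (a.1) ≤ (2:ℝ) ^ j₀ * 2 := by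
    have hcong : ∀ a ∈ u.filter (fun a => a.1 ≤ j₀),
        (2:ℝ) ^ (a.1) = (2:ℝ) ^ j₀ * ((2:ℝ)⁻¹) ^ ((j₀ - a.1).toNat) := by
      intro a ha
      have haP : a.1 ≤ j₀ := (Finset.mem_filter.1 ha).2
      have hn : (((j₀ - a.1).toNat : ℤ)) = j₀ - (a:ℤ) := Int.toNat_of_nonneg (by omega)
      rw [inv_pow, ← zpow_natCast (2:ℝ), hn, ← zpow_neg, ← zpow_add₀ (by norm_num : (2:ℝ) ≠ 0)]
      congr 1
      omega
    have hinj : ∀ a ∈ u.filter (fun a => a.1 ≤ j₀), ∀ b ∈ u.filter (fun a => a.1 ≤ j₀),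
        (j₀ - a.1).toNat = (j₀ - b.1).toNat → a = b := by
      intro a ha b hb hab
      have ha' : a.1 ≤ j₀ := (Finset.mem_filter.1 ha).2
      have hb' : b.1 ≤ j₀ := (Finset.mem_filter.1 hb).2
      exact Subtype.ext (by omega)
    have himg : ∑ n ∈ (u.filter (fun a => a.1 ≤ j₀)).image (fun a => (j₀ - a.1).toNat),
        ((2:ℝ)⁻¹) ^ n
        = ∑ a ∈ u.filter (fun a => a.1 ≤ j₀), ((2:ℝ)⁻¹) ^ ((j₀ - a.1).toNat) :=
      Finset.sum_image hinj
    calc ∑ a ∈ u.filter (fun a => a.1 ≤ j₀), (2:ℝ) ^ (a.1)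
        = ∑ a ∈ u.filter (fun a => a.1 ≤ j₀), (2:ℝ) ^ j₀ * ((2:ℝ)⁻¹) ^ ((j₀ - a.1).toNat) :=
          Finset.sum_congr rfl hcong
    _ = (2:ℝ) ^ j₀ * ∑ a ∈ u.filter (fun a => a.1 ≤ j₀), ((2:ℝ)⁻¹) ^ ((j₀ - a.1).toNat) := by
          rw [Finset.mul_sum]
    _ ≤ (2:ℝ) ^ j₀ * 2 := by
          apply mul_le_mul_of_nonneg_left _ (zpow_pos (by norm_num : (0:ℝ) < 2) j₀).le
          rw [← himg]
          refine le_trans (Summable.sum_le_tsum _ (fun n _ => by positivity)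
            (summable_geometric_of_lt_one (by norm_num) (by norm_num))) ?_
          rw [tsum_geometric_of_lt_one (by norm_num) (by norm_num)]
          norm_num
  have hsum2 : ∑ a ∈ u.filter (fun a => ¬ a.1 ≤ j₀), K * ((2:ℝ) ^ (a.1)) ^ α
      ≤ K * ((2:ℝ) ^ (j₀+1)) ^ α * (1 - (2:ℝ)^α)⁻¹ := by
    have hcong : ∀ a ∈ u.filter (fun a => ¬ a.1 ≤ j₀),
        K * ((2:ℝ) ^ (a.1)) ^ α
          = (K * ((2:ℝ) ^ (j₀+1)) ^ α) * ((2:ℝ) ^ α) ^ ((a.1 - (j₀+1)).toNat) := by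
      intro a ha
      have haP : j₀ < a.1 := not_le.1 (Finset.mem_filter.1 ha).2
      have hn : (((a.1 - (j₀+1)).toNat : ℤ)) = a.1 - (j₀+1) := Int.toNat_of_nonneg (by omega)
      have hsplit2 : (2:ℝ) ^ (a.1) = (2:ℝ) ^ (j₀+1) * (2:ℝ) ^ (((a.1 - (j₀+1)).toNat : ℕ)) := by
        rw [← zpow_natCast (2:ℝ), hn, ← zpow_add₀ (by norm_num : (2:ℝ) ≠ 0)]
        congr 1
        omega
      rw [hsplit2, Real.mul_rpow (zpow_pos (by norm_num : (0:ℝ) < 2) _).le (by positivity),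
        hgeom]
      ring
    have hinj : ∀ a ∈ u.filter (fun a => ¬ a.1 ≤ j₀), ∀ b ∈ u.filter (fun a => ¬ a.1 ≤ j₀),
        (a.1 - (j₀+1)).toNat = (b.1 - (j₀+1)).toNat → a = b := by
      intro a ha b hb hab
      have ha' : j₀ < a.1 := not_le.1 (Finset.mem_filter.1 ha).2
      have hb' : j₀ < b.1 := not_le.1 (Finset.mem_filter.1 hb).2
      exact Subtype.ext (by omega)
    have himg : ∑ n ∈ (u.filter (fun a => ¬ a.1 ≤ j₀)).image
          (fun a => (a.1 - (j₀+1)).toNat), ((2:ℝ) ^ α) ^ n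
        = ∑ a ∈ u.filter (fun a => ¬ a.1 ≤ j₀), ((2:ℝ) ^ α) ^ ((a.1 - (j₀+1)).toNat) :=
      Finset.sum_image hinj
    calc ∑ a ∈ u.filter (fun a => ¬ a.1 ≤ j₀), K * ((2:ℝ) ^ (a.1)) ^ α
        = ∑ a ∈ u.filter (fun a => ¬ a.1 ≤ j₀),
            (K * ((2:ℝ) ^ (j₀+1)) ^ α) * ((2:ℝ) ^ α) ^ ((a.1 - (j₀+1)).toNat) :=
          Finset.sum_congr rfl hcong
    _ = (K * ((2:ℝ) ^ (j₀+1)) ^ α) *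
          ∑ a ∈ u.filter (fun a => ¬ a.1 ≤ j₀), ((2:ℝ) ^ α) ^ ((a.1 - (j₀+1)).toNat) := by
          rw [Finset.mul_sum]
    _ ≤ (K * ((2:ℝ) ^ (j₀+1)) ^ α) * (1 - (2:ℝ)^α)⁻¹ := by
          apply mul_le_mul_of_nonneg_left _ (by positivity)
          rw [← himg]
          refine le_trans (Summable.sum_le_tsum _ (fun n _ => by positivity)
            (summable_geometric_of_lt_one h2α.le h2α1)) ?_
          rw [tsum_geometric_of_lt_one h2α.le h2α1]
  calc ∑ a ∈ u, ((2 : ℝ) ^ (a : ℤ) *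
        ((μ (E ∩ ball y ((2 : ℝ) ^ (a : ℤ)))).toReal /
          (μ (ball y ((2 : ℝ) ^ (a : ℤ)))).toReal) ^ (1 / p))
      ≤ (2:ℝ) ^ j₀ * 2 + K * ((2:ℝ) ^ (j₀+1)) ^ α * (1 - (2:ℝ)^α)⁻¹ :=
        le_trans hsplit (add_le_add hsum1 hsum2)
  _ ≤ 2*t + K * t^α * (1 - (2:ℝ)^α)⁻¹ := by
      apply add_le_add
      · linarith
      · have h4 : ((2:ℝ) ^ (j₀+1)) ^ α ≤ t ^ α := by
          have := Real.rpow_le_rpow_of_nonpos ht ht2.le hα.le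
          exact this
        exact mul_le_mul_of_nonneg_right (mul_le_mul_of_nonneg_left h4 hK.le) (by positivity)
  _ = C * (r / V ^ (1/Q)) * m ^ (1/Q) := hfinal
end
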